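/- Let μ_k = p·e^{-t·λ_k} where λ_k ≥ C·k^{2/m} for constants p, t, C > 0 and integer m ≥ 2. Then for all 0 < λ < 1/2, the effective dimension N(λ) = Σ_{k=1}^∞ μ_k/(λ + μ_k) satisfies N(λ) ≤ D·(log(1/λ))^{m/2} for some constant D depending only on p, t, C, m. -/

import Mathlib

set_option maxHeartbeats 1000000

lemma aux_summable_exp_rpow {b ε : ℝ} (hb : 0 < b) (hε : 0 < ε) :
    Summable (fun k : ℕ => Real.exp (-(b * (k:ℝ) ^ ε))) := by
  set k0 : ℕ := ⌈(4/(b*ε)) ^ ((2:ℝ)/ε)⌉₊ + 1 with hk0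
  have hk0pos : 1 ≤ k0 := Nat.le_add_left 1 _
  rw [← summable_nat_add_iff k0]
  have hsum2 : Summable (fun n : ℕ => 1 / ((n:ℝ)+1)^2) := by
    have := (summable_nat_add_iff (f := fun n : ℕ => 1 / (n:ℝ)^2) 1).2
      (Real.summable_one_div_nat_pow.2 (by norm_num))
    simpa [Nat.cast_add] using this
  apply Summable.of_nonneg_of_le (fun n => (Real.exp_pos _).le) (fun n => ?_) hsum2
  set x : ℝ := ((n + k0 : ℕ) : ℝ) with hx
  have hx1 : (1:ℝ) ≤ x := by
    have h' : 1 ≤ n + k0 := by omega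
    rw [hx]; exact_mod_cast h'
  have hxn : ((n:ℝ)+1) ≤ x := by
    have : n + 1 ≤ n + k0 := by omega
    rw [hx]; push_cast; exact_mod_cast this
  have hxk0 : (4/(b*ε)) ^ ((2:ℝ)/ε) ≤ x := by
    refine le_trans (Nat.le_ceil _) ?_
    have : (⌈(4/(b*ε)) ^ ((2:ℝ)/ε)⌉₊ : ℝ) ≤ ((n + k0:ℕ):ℝ) := by
      have : ⌈(4/(b*ε)) ^ ((2:ℝ)/ε)⌉₊ ≤ n + k0 := by omega
      exact_mod_cast this
    exact this
  have hxhalf : 4/(b*ε) ≤ x ^ (ε/2) := by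
    have h1 : ((4/(b*ε)) ^ ((2:ℝ)/ε)) ^ (ε/2) ≤ x ^ (ε/2) :=
      Real.rpow_le_rpow (by positivity) hxk0 (by positivity)
    have h2 : ((4/(b*ε)) ^ ((2:ℝ)/ε)) ^ (ε/2) = 4/(b*ε) := by
      rw [← Real.rpow_mul (by positivity)]
      rw [show (2:ℝ)/ε * (ε/2) = 1 by field_simp]
      exact Real.rpow_one _
    linarith [h2 ▸ h1]
  have hlog : 2 * Real.log x ≤ b * x ^ ε := by
    have h1 : Real.log x ≤ x ^ (ε/2) / (ε/2) := Real.log_le_rpow_div (by linarith) (by positivity)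
    have h2 : x ^ (ε/2) * x ^ (ε/2) = x ^ ε := by
      rw [← Real.rpow_add (by linarith)]; ring_nf
    have h3 : 4 / ε * x ^ (ε/2) ≤ b * (x ^ (ε/2) * x ^ (ε/2)) := by
      have := mul_le_mul_of_nonneg_right hxhalf (Real.rpow_nonneg (by linarith : (0:ℝ) ≤ x) (ε/2))
      calc 4 / ε * x ^ (ε/2) = b * (4/(b*ε) * x ^ (ε/2)) := by field_simp
        _ ≤ b * (x ^ (ε/2) * x ^ (ε/2)) := by
            apply mul_le_mul_of_nonneg_left _ hb.le
            exact this
    rw [← h2]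
    have h4 : 2 * Real.log x ≤ 2 * (x ^ (ε/2) / (ε/2)) := by linarith
    have : 2 * (x ^ (ε/2) / (ε/2)) = 4 / ε * x ^ (ε/2) := by field_simp; ring
    linarith
  have hx2 : x^2 ≤ Real.exp (b * x ^ ε) := by
    have hxpos : (0:ℝ) < x := by linarith
    have hx2' : Real.exp (2 * Real.log x) = x^2 := by
      rw [show (2:ℝ) * Real.log x = Real.log x + Real.log x by ring, Real.exp_add,
        Real.exp_log hxpos]
      ring
    rw [← hx2']
    exact Real.exp_le_exp.2 hlog
  calc Real.exp (-(b * x ^ ε)) = 1 / Real.exp (b * x ^ ε) := by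
        rw [Real.exp_neg]; ring
    _ ≤ 1 / x^2 := by
        apply one_div_le_one_div_of_le (by positivity) hx2
    _ ≤ 1 / ((n:ℝ)+1)^2 := by
        apply one_div_le_one_div_of_le (by positivity)
        nlinarith



/-- Effective-dimension bound: if `μ_k = p·e^{-t·λ_k}` with `λ_k ≥ C·k^{2/m}` (Weyl's law)
for `m ≥ 2`, then `N(λ) = Σ_{k≥1} μ_k/(λ+μ_k) ≤ D·(log(1/λ))^{m/2}` for all `0 < λ < 1/2`,
with `D` depending only on `p, t, C, m`. -/
theorem effective_dimension_bound (p t C : ℝ) (hp : 0 < p) (ht : 0 < t) (hC : 0 < C)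
    (m : ℕ) (hm : 2 ≤ m) (lamSeq : ℕ → ℝ)
    (hweyl : ∀ k : ℕ, 1 ≤ k → C * (k : ℝ) ^ ((2 : ℝ) / m) ≤ lamSeq k) :
    ∃ D : ℝ, 0 < D ∧ ∀ lam : ℝ, 0 < lam → lam < 1 / 2 →
      (∑' k : ℕ, p * Real.exp (-t * lamSeq (k + 1)) /
          (lam + p * Real.exp (-t * lamSeq (k + 1))))
        ≤ D * (Real.log (1 / lam)) ^ ((m : ℝ) / 2) := by
  have hlog2 : 0 < Real.log 2 := Real.log_pos (by norm_num)
  have ha : 0 < t * C := mul_pos ht hC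
  have hmR : (0:ℝ) < (m:ℝ) := by
    have : 0 < m := lt_of_lt_of_le (by norm_num) hm
    exact_mod_cast this
  set a := t * C with ha_def
  set g : ℕ → ℝ := fun k => Real.exp (-(a/2 * (k:ℝ) ^ ((2:ℝ)/m))) with hg
  have hgsum : Summable g := by
    have := aux_summable_exp_rpow (b := a/2) (ε := (2:ℝ)/m) (by positivity) (by positivity)
    exact this
  set S : ℝ := ∑' k : ℕ, g k with hS
  have hSnn : 0 ≤ S := tsum_nonneg (fun k => (Real.exp_pos _).le)
  set c1 : ℝ := (2 / a) ^ ((m:ℝ)/2) + 2 / (Real.log 2) ^ ((m:ℝ)/2) with hc1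
  have hc1pos : 0 < c1 := by positivity
  refine ⟨c1 + p * S / (Real.log 2) ^ ((m:ℝ)/2), by positivity, ?_⟩
  intro lam hlam hlam2
  set L := Real.log (1 / lam) with hLdef
  have h2L : Real.log 2 ≤ L := by
    apply Real.log_le_log (by norm_num)
    rw [le_div_iff₀ hlam]; linarith
  have hL : 0 < L := lt_of_lt_of_le hlog2 h2L
  have hexpL : Real.exp L = 1 / lam := Real.exp_log (by positivity)
  set B : ℝ := (2 * L / a) ^ ((m:ℝ)/2) with hB
  have hBpos : 0 < B := by positivity
  set K : ℕ := ⌈B⌉₊ + 1 with hK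
  have hKreal : (1:ℝ) ≤ (K:ℝ) := by
    have : 1 ≤ K := Nat.le_add_left 1 _
    exact_mod_cast this
  have hBK : B ≤ (K:ℝ) := by
    refine le_trans (Nat.le_ceil B) ?_
    rw [hK]; push_cast; linarith
  -- key pointwise bound for large k
  have key : ∀ k : ℕ, K ≤ k + 1 →
      p * Real.exp (-t * lamSeq (k + 1)) / (lam + p * Real.exp (-t * lamSeq (k + 1)))
        ≤ p * g (k+1) := by
    intro k hk
    set n : ℕ := k + 1 with hn
    have hn1 : (1:ℝ) ≤ (n:ℝ) := by exact_mod_cast Nat.one_le_iff_ne_zero.2 (by omega)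
    have hKn : (K:ℝ) ≤ (n:ℝ) := by exact_mod_cast hk
    set μ : ℝ := p * Real.exp (-t * lamSeq n) with hμ
    have hμpos : 0 < μ := by positivity
    have step1 : μ / (lam + μ) ≤ μ / lam := by
      apply div_le_div_of_nonneg_left hμpos.le hlam
      linarith
    have hA : 2 * L / a ≤ (n:ℝ) ^ ((2:ℝ)/m) := by
      have h1 : B ^ ((2:ℝ)/m) ≤ (n:ℝ) ^ ((2:ℝ)/m) :=
        Real.rpow_le_rpow hBpos.le (le_trans hBK hKn) (by positivity)
      have h2 : B ^ ((2:ℝ)/m) = 2 * L / a := by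
        rw [hB, ← Real.rpow_mul (by positivity)]
        rw [show (m:ℝ)/2 * ((2:ℝ)/m) = 1 by field_simp]
        exact Real.rpow_one _
      linarith [h2 ▸ h1]
    have hμle : μ ≤ p * Real.exp (-(a * (n:ℝ) ^ ((2:ℝ)/m))) := by
      have h1 : C * (n:ℝ) ^ ((2:ℝ)/m) ≤ lamSeq n := hweyl n (by omega)
      have : -t * lamSeq n ≤ -(a * (n:ℝ) ^ ((2:ℝ)/m)) := by
        rw [ha_def]; nlinarith
      exact mul_le_mul_of_nonneg_left (Real.exp_le_exp.2 this) hp.le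
    have step2 : μ / lam ≤ p * Real.exp (L - a * (n:ℝ) ^ ((2:ℝ)/m)) := by
      rw [div_eq_mul_inv, ← one_div, ← hexpL]
      calc μ * Real.exp L ≤ p * Real.exp (-(a * (n:ℝ) ^ ((2:ℝ)/m))) * Real.exp L :=
            mul_le_mul_of_nonneg_right hμle (Real.exp_pos _).le
        _ = p * Real.exp (L - a * (n:ℝ) ^ ((2:ℝ)/m)) := by
            rw [mul_assoc, ← Real.exp_add]; ring_nf
    have step3 : L - a * (n:ℝ) ^ ((2:ℝ)/m) ≤ -(a/2 * (n:ℝ) ^ ((2:ℝ)/m)) := by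
      have hLle : L ≤ (a/2) * (n:ℝ) ^ ((2:ℝ)/m) := by
        rw [div_le_iff₀ ha] at hA
        linarith
      have harith : a * (n:ℝ) ^ ((2:ℝ)/m) = 2 * (a/2 * (n:ℝ) ^ ((2:ℝ)/m)) := by ring
      linarith
    calc μ / (lam + μ) ≤ μ / lam := step1
      _ ≤ p * Real.exp (L - a * (n:ℝ) ^ ((2:ℝ)/m)) := step2
      _ ≤ p * g n :=
          mul_le_mul_of_nonneg_left (Real.exp_le_exp.2 step3) hp.le
  -- dominating function
  set h : ℕ → ℝ := fun k => (if k + 1 < K then (1:ℝ) else 0) + p * g (k+1) with hh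
  have hfle : ∀ k : ℕ,
      p * Real.exp (-t * lamSeq (k + 1)) / (lam + p * Real.exp (-t * lamSeq (k + 1))) ≤ h k := by
    intro k
    by_cases hcase : k + 1 < K
    · have hb : p * Real.exp (-t * lamSeq (k + 1)) / (lam + p * Real.exp (-t * lamSeq (k + 1))) ≤ 1 := by
        rw [div_le_one (by positivity)]
        linarith
      have : 0 ≤ p * g (k+1) := by positivity
      simp only [hh, if_pos hcase]; linarith
    · have := key k (by omega)
      simp only [hh, if_neg hcase]; linarith
  have hfnn : ∀ k : ℕ,
      0 ≤ p * Real.exp (-t * lamSeq (k + 1)) / (lam + p * Real.exp (-t * lamSeq (k + 1))) := by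
    intro k; positivity
  have hsum_ind : Summable (fun k : ℕ => (if k + 1 < K then (1:ℝ) else 0)) := by
    apply summable_of_ne_finset_zero (s := Finset.range K)
    intro b hb
    simp only [Finset.mem_range, not_lt] at hb
    rw [if_neg (by omega)]
  have hsum_tail : Summable (fun k : ℕ => g (k+1)) :=
    (summable_nat_add_iff 1).2 hgsum
  have hsum_geo : Summable (fun k : ℕ => p * g (k+1)) := hsum_tail.mul_left p
  have hsumh : Summable h := hsum_ind.add hsum_geo
  have hsumf : Summable (fun k : ℕ =>
      p * Real.exp (-t * lamSeq (k + 1)) / (lam + p * Real.exp (-t * lamSeq (k + 1)))) :=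
    Summable.of_nonneg_of_le hfnn hfle hsumh
  have hts : (∑' k : ℕ, p * Real.exp (-t * lamSeq (k + 1)) /
      (lam + p * Real.exp (-t * lamSeq (k + 1)))) ≤ ∑' k, h k :=
    Summable.tsum_le_tsum hfle hsumf hsumh
  have hind_val : (∑' k : ℕ, (if k + 1 < K then (1:ℝ) else 0)) ≤ (K:ℝ) := by
    rw [tsum_eq_sum (s := Finset.range K) ?_]
    · calc (∑ k ∈ Finset.range K, (if k + 1 < K then (1:ℝ) else 0))
          ≤ ∑ k ∈ Finset.range K, (1:ℝ) := by
            apply Finset.sum_le_sum; intro i _; split <;> norm_num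
        _ = (K:ℝ) := by simp
    · intro b hb
      simp only [Finset.mem_range, not_lt] at hb
      rw [if_neg (by omega)]
  have htail_le : (∑' k : ℕ, g (k+1)) ≤ S := by
    have := (Summable.sum_add_tsum_nat_add (f := g) 1 hgsum)
    have h0 : 0 ≤ ∑ i ∈ Finset.range 1, g i := by
      apply Finset.sum_nonneg; intro i _; exact (Real.exp_pos _).le
    rw [hS]; linarith [this]
  have hgeo_val : (∑' k : ℕ, p * g (k+1)) ≤ p * S := by
    rw [tsum_mul_left]
    exact mul_le_mul_of_nonneg_left htail_le hp.le
  have htsumh : (∑' k, h k) ≤ (K:ℝ) + p * S := by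
    rw [hh, Summable.tsum_add hsum_ind hsum_geo]
    exact add_le_add hind_val hgeo_val
  -- bound K
  have hKbound : (K:ℝ) ≤ c1 * L ^ ((m:ℝ)/2) := by
    have h1 : (K:ℝ) ≤ B + 2 := by
      rw [hK]; push_cast
      have := Nat.ceil_lt_add_one hBpos.le
      linarith
    have h2 : B = (2/a) ^ ((m:ℝ)/2) * L ^ ((m:ℝ)/2) := by
      rw [hB, ← Real.mul_rpow (by positivity) hL.le]
      congr 1; ring
    have h3 : (Real.log 2) ^ ((m:ℝ)/2) ≤ L ^ ((m:ℝ)/2) :=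
      Real.rpow_le_rpow hlog2.le h2L (by positivity)
    have h4 : (2:ℝ) ≤ 2 / (Real.log 2) ^ ((m:ℝ)/2) * L ^ ((m:ℝ)/2) := by
      rw [div_mul_eq_mul_div, le_div_iff₀ (by positivity)]
      linarith
    rw [hc1]; rw [h2] at h1
    rw [show ((2/a) ^ ((m:ℝ)/2) + 2 / (Real.log 2) ^ ((m:ℝ)/2)) * L ^ ((m:ℝ)/2)
      = (2/a) ^ ((m:ℝ)/2) * L ^ ((m:ℝ)/2) + 2 / (Real.log 2) ^ ((m:ℝ)/2) * L ^ ((m:ℝ)/2) by ring]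
    linarith
  have hpbound : p * S ≤ p * S / (Real.log 2) ^ ((m:ℝ)/2) * L ^ ((m:ℝ)/2) := by
    have h3 : (Real.log 2) ^ ((m:ℝ)/2) ≤ L ^ ((m:ℝ)/2) :=
      Real.rpow_le_rpow hlog2.le h2L (by positivity)
    rw [div_mul_eq_mul_div, le_div_iff₀ (by positivity)]
    exact mul_le_mul_of_nonneg_left h3 (mul_nonneg hp.le hSnn)
  calc (∑' k : ℕ, p * Real.exp (-t * lamSeq (k + 1)) /
        (lam + p * Real.exp (-t * lamSeq (k + 1))))
      ≤ ∑' k, h k := hts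
    _ ≤ (K:ℝ) + p * S := htsumh
    _ ≤ c1 * L ^ ((m:ℝ)/2) + p * S / (Real.log 2) ^ ((m:ℝ)/2) * L ^ ((m:ℝ)/2) :=
        add_le_add hKbound hpbound
    _ = (c1 + p * S / (Real.log 2) ^ ((m:ℝ)/2)) * L ^ ((m:ℝ)/2) := by ring
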